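/- Let F be a free group and let R, S be normal subgroups of F. Then the subgroup [R'∩S', R∩S]·[R'∩S, R'∩S]·[R∩S', R∩S'] of F is contained in F ∩ (1 + 𝔯𝔣𝔰), i.e., for every element w of this product of commutator subgroups, w − 1 lies in the ideal 𝔯𝔣𝔰 of ℤ[F]. -/

import Mathlib

open MonoidAlgebra
open scoped commutatorElement

/-- For a subgroup `G` of `F`, the two-sided ideal of the integral group ring `ℤ[F]`
generated by `{g - 1 : g ∈ G}`, realized as the `ℤ`-span of `{f₁ (g-1) f₂}`. -/
noncomputable def relIdeal (F : Type) [Group F] (G : Subgroup F) : Submodule ℤ (MonoidAlgebra ℤ F) :=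
  Submodule.span ℤ {x | ∃ f₁ f₂ : F, ∃ g ∈ G, x = of ℤ F f₁ * (of ℤ F g - 1) * of ℤ F f₂}

lemma mem_relIdeal {F : Type} [Group F] {G : Subgroup F} {g : F} (hg : g ∈ G) :
    of ℤ F g - 1 ∈ relIdeal F G := by
  apply Submodule.subset_span
  exact ⟨1, 1, g, hg, by rw [map_one, one_mul, mul_one]⟩

lemma relIdeal_mono {F : Type} [Group F] {G H : Subgroup F} (h : G ≤ H) :
    relIdeal F G ≤ relIdeal F H := by
  apply Submodule.span_mono
  rintro x ⟨f₁, f₂, g, hg, rfl⟩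
  exact ⟨f₁, f₂, g, h hg, rfl⟩

lemma smul_mem_relIdeal {F : Type} [Group F] {G : Subgroup F} (f : F)
    {x : MonoidAlgebra ℤ F} (hx : x ∈ relIdeal F G) :
    of ℤ F f * x ∈ relIdeal F G := by
  induction hx using Submodule.span_induction with
  | mem y hy =>
      obtain ⟨f₁, f₂, g, hg, rfl⟩ := hy
      apply Submodule.subset_span
      exact ⟨f * f₁, f₂, g, hg, by rw [map_mul]; noncomm_ring⟩
  | zero => simp
  | add y z _ _ hy hz => rw [mul_add]; exact add_mem hy hz
  | smul c y _ hy => rw [mul_smul_comm]; exact Submodule.smul_mem _ c hy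

lemma smul_mem_mul {F : Type} [Group F] {A B : Submodule ℤ (MonoidAlgebra ℤ F)}
    (hA : ∀ (f : F) (x : MonoidAlgebra ℤ F), x ∈ A → of ℤ F f * x ∈ A) (f : F)
    {x : MonoidAlgebra ℤ F} (hx : x ∈ A * B) :
    of ℤ F f * x ∈ A * B := by
  refine Submodule.mul_induction_on hx ?_ ?_
  · intro a ha b hb
    rw [← mul_assoc]
    exact Submodule.mul_mem_mul (hA f a ha) hb
  · intro y z hy hz
    rw [mul_add]
    exact add_mem hy hz

lemma relIdeal_smul_mem {F : Type} [Group F] {G : Subgroup F} (f : F)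
    {x : MonoidAlgebra ℤ F} (hx : x ∈ relIdeal F G) :
    x * of ℤ F f ∈ relIdeal F G := by
  induction hx using Submodule.span_induction with
  | mem y hy =>
      obtain ⟨f₁, f₂, g, hg, rfl⟩ := hy
      apply Submodule.subset_span
      exact ⟨f₁, f₂ * f, g, hg, by rw [map_mul]; noncomm_ring⟩
  | zero => simp
  | add y z _ _ hy hz => rw [add_mul]; exact add_mem hy hz
  | smul c y _ hy => rw [smul_mul_assoc]; exact Submodule.smul_mem _ c hy

lemma mul_smul_mem {F : Type} [Group F] {A B : Submodule ℤ (MonoidAlgebra ℤ F)}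
    (hB : ∀ (f : F) (x : MonoidAlgebra ℤ F), x ∈ B → x * of ℤ F f ∈ B) (f : F)
    {x : MonoidAlgebra ℤ F} (hx : x ∈ A * B) :
    x * of ℤ F f ∈ A * B := by
  refine Submodule.mul_induction_on hx ?_ ?_
  · intro a ha b hb
    rw [mul_assoc]
    exact Submodule.mul_mem_mul ha (hB f b hb)
  · intro y z hy hz
    rw [add_mul]
    exact add_mem hy hz

/-- The subgroup of elements `w` with `w - 1 ∈ I`, for `I` closed under left
multiplication by group elements. -/
def unitsSubgroup (F : Type) [Group F] (I : Submodule ℤ (MonoidAlgebra ℤ F))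
    (hI : ∀ (f : F) (x : MonoidAlgebra ℤ F), x ∈ I → of ℤ F f * x ∈ I) : Subgroup F where
  carrier := {w | of ℤ F w - 1 ∈ I}
  one_mem' := by
    show of ℤ F 1 - 1 ∈ I
    rw [map_one, sub_self]
    exact zero_mem I
  mul_mem' := by
    intro x y hx hy
    show of ℤ F (x * y) - 1 ∈ I
    have h : of ℤ F (x * y) - 1 = of ℤ F x * (of ℤ F y - 1) + (of ℤ F x - 1) := by
      rw [map_mul]; noncomm_ring
    rw [h]
    exact add_mem (hI x _ hy) hx
  inv_mem' := by
    intro x hx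
    show of ℤ F x⁻¹ - 1 ∈ I
    have h : of ℤ F x⁻¹ - 1 = -(of ℤ F x⁻¹ * (of ℤ F x - 1)) := by
      rw [mul_sub, ← map_mul, inv_mul_cancel, map_one]; noncomm_ring
    rw [h]
    exact neg_mem (hI x⁻¹ _ hx)

lemma commutator_sub_one {F : Type} [Group F] (a b : F) :
    of ℤ F ⁅a, b⁆ - 1 =
      ((of ℤ F a - 1) * (of ℤ F b - 1) - (of ℤ F b - 1) * (of ℤ F a - 1)) *
        of ℤ F (b * a)⁻¹ := by
  have inner : (of ℤ F a - 1) * (of ℤ F b - 1) - (of ℤ F b - 1) * (of ℤ F a - 1)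
      = of ℤ F (a * b) - of ℤ F (b * a) := by
    rw [map_mul, map_mul]; noncomm_ring
  have h1 : of ℤ F (b * a) * of ℤ F (b * a)⁻¹ = 1 := by
    rw [← map_mul, mul_inv_cancel, map_one]
  have hg : (a * b) * (b * a)⁻¹ = ⁅a, b⁆ := by group
  have h2 : of ℤ F (a * b) * of ℤ F (b * a)⁻¹ = of ℤ F ⁅a, b⁆ := by
    rw [← map_mul, hg]
  rw [inner, sub_mul, h1, h2]

lemma derived_sub_one {F : Type} [Group F] {G : Subgroup F} {w : F}
    (hw : w ∈ ⁅G, G⁆) : of ℤ F w - 1 ∈ relIdeal F G * relIdeal F G := by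
  have hcl : ∀ (f : F) (x : MonoidAlgebra ℤ F), x ∈ relIdeal F G * relIdeal F G →
      of ℤ F f * x ∈ relIdeal F G * relIdeal F G :=
    fun f x hx => smul_mem_mul (fun f' x' h => smul_mem_relIdeal f' h) f hx
  have : ⁅G, G⁆ ≤ unitsSubgroup F (relIdeal F G * relIdeal F G) hcl := by
    rw [Subgroup.commutator_le]
    intro g₁ h₁ g₂ h₂
    show of ℤ F ⁅g₁, g₂⁆ - 1 ∈ relIdeal F G * relIdeal F G
    rw [commutator_sub_one]
    exact mul_smul_mem (fun f' x' h => relIdeal_smul_mem f' h) _ (sub_mem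
      (Submodule.mul_mem_mul (mem_relIdeal h₁) (mem_relIdeal h₂))
      (Submodule.mul_mem_mul (mem_relIdeal h₂) (mem_relIdeal h₁)))
  exact this hw

theorem stmt0 (F : Type) [Group F] [IsFreeGroup F] (R S : Subgroup F)
    [R.Normal] [S.Normal] (w : F)
    (hw : w ∈ ⁅⁅R, R⁆ ⊓ ⁅S, S⁆, R ⊓ S⁆ ⊔ ⁅⁅R, R⁆ ⊓ S, ⁅R, R⁆ ⊓ S⁆ ⊔
      ⁅R ⊓ ⁅S, S⁆, R ⊓ ⁅S, S⁆⁆) :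
    of ℤ F w - 1 ∈ relIdeal F R * relIdeal F ⊤ * relIdeal F S := by
  set I : Submodule ℤ (MonoidAlgebra ℤ F) := relIdeal F R * relIdeal F ⊤ * relIdeal F S with hI
  have hcl : ∀ (f : F) (x : MonoidAlgebra ℤ F), x ∈ I → of ℤ F f * x ∈ I :=
    fun f x hx => smul_mem_mul
      (fun f' x' h => smul_mem_mul (fun f'' x'' h' => smul_mem_relIdeal f'' h') f' h) f hx
  have hcr : ∀ (f : F) (x : MonoidAlgebra ℤ F), x ∈ I → x * of ℤ F f ∈ I :=
    fun f x hx => mul_smul_mem (fun f' x' h => relIdeal_smul_mem f' h) f hx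
  -- inclusions between products of ideals
  have hRR : relIdeal F R * relIdeal F R ≤ relIdeal F R * relIdeal F (⊤ : Subgroup F) :=
    mul_le_mul' le_rfl (relIdeal_mono le_top)
  have hSS : relIdeal F S * relIdeal F S ≤ relIdeal F (⊤ : Subgroup F) * relIdeal F S :=
    mul_le_mul' (relIdeal_mono le_top) le_rfl
  -- product membership helpers
  have key1 : ∀ a b : F, of ℤ F a - 1 ∈ relIdeal F R * relIdeal F (⊤ : Subgroup F) →
      b ∈ S → (of ℤ F a - 1) * (of ℤ F b - 1) ∈ I :=
    fun a b ha hb => Submodule.mul_mem_mul ha (mem_relIdeal hb)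
  have key2 : ∀ a b : F, a ∈ R → of ℤ F b - 1 ∈ relIdeal F (⊤ : Subgroup F) * relIdeal F S →
      (of ℤ F a - 1) * (of ℤ F b - 1) ∈ I := by
    intro a b ha hb
    rw [hI, mul_assoc]
    exact Submodule.mul_mem_mul (mem_relIdeal ha) hb
  have hmem : ∀ a b : F, (of ℤ F a - 1) * (of ℤ F b - 1) ∈ I →
      (of ℤ F b - 1) * (of ℤ F a - 1) ∈ I → ⁅a, b⁆ ∈ unitsSubgroup F I hcl := by
    intro a b h1 h2
    show of ℤ F ⁅a, b⁆ - 1 ∈ I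
    rw [commutator_sub_one]
    exact hcr _ _ (sub_mem h1 h2)
  have hle : ⁅⁅R, R⁆ ⊓ ⁅S, S⁆, R ⊓ S⁆ ⊔ ⁅⁅R, R⁆ ⊓ S, ⁅R, R⁆ ⊓ S⁆ ⊔
      ⁅R ⊓ ⁅S, S⁆, R ⊓ ⁅S, S⁆⁆ ≤ unitsSubgroup F I hcl := by
    refine sup_le (sup_le ?_ ?_) ?_
    · rw [Subgroup.commutator_le]
      rintro a ⟨haR, haS⟩ b ⟨hbR, hbS⟩
      refine hmem a b ?_ ?_
      · exact key1 a b (hRR (derived_sub_one haR)) hbS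
      · exact key2 b a hbR (hSS (derived_sub_one haS))
    · rw [Subgroup.commutator_le]
      rintro a ⟨haR, haS⟩ b ⟨hbR, hbS⟩
      refine hmem a b ?_ ?_
      · exact key1 a b (hRR (derived_sub_one haR)) hbS
      · exact key1 b a (hRR (derived_sub_one hbR)) haS
    · rw [Subgroup.commutator_le]
      rintro a ⟨haR, haS⟩ b ⟨hbR, hbS⟩
      refine hmem a b ?_ ?_
      · exact key2 a b haR (hSS (derived_sub_one hbS))
      · exact key2 b a hbR (hSS (derived_sub_one haS))
  exact hle hw
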